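/- For every candidate set C ⊆ S, LB_2(C) ≤ LB_4(C). -/

import Mathlib

/-!
Formalization of guessing games (Wordle-style), following the paper's definitions:
guesses `G`, secrets `S ⊆ G`, responses `R` with `|R| > 1`, affirmative response
`r* ∈ R`, and an answering function `a` with `a(g,s) = r* ↔ g = s`.
-/

structure GuessingGame (α ρ : Type*) [DecidableEq α] [DecidableEq ρ] where
  G : Finset α
  S : Finset α
  R : Finset ρ
  rstar : ρ
  ans : α → α → ρ
  S_subset_G : S ⊆ G
  one_lt_card_R : 1 < R.card
  rstar_mem : rstar ∈ R
  ans_mem : ∀ g ∈ G, ∀ s ∈ S, ans g s ∈ R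
  ans_eq_rstar_iff : ∀ g ∈ G, ∀ s ∈ S, (ans g s = rstar ↔ g = s)

namespace GuessingGame

variable {α ρ : Type*} [DecidableEq α] [DecidableEq ρ] (gm : GuessingGame α ρ)

/-- The split `C_{g,r} = {c ∈ C : a(g,c) = r}`. -/
def split (C : Finset α) (g : α) (r : ρ) : Finset α :=
  C.filter fun c => gm.ans g c = r

/-- `nSplits(g,C) = |{r ∈ R : C_{g,r} ≠ ∅}|`. -/
def nSplits (g : α) (C : Finset α) : ℕ :=
  (gm.R.filter fun r => (gm.split C g r).Nonempty).card

/-- The useful guesses `UG(C)`: for `|C| > 1` the guesses `g ∈ G` with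
`nSplits(g,C) ≠ 1`; for `|C| ≤ 1`, `UG(C) = C`. -/
def UG (C : Finset α) : Finset α :=
  if 1 < C.card then gm.G.filter fun g => gm.nSplits g C ≠ 1 else C

/-- `MaxSplits(C) = max_{g ∈ G} nSplits(g,C)`. -/
def MaxSplits (C : Finset α) : ℕ :=
  gm.G.sup fun g => gm.nSplits g C

end GuessingGame

/-- `Bound(n,b)`: `Bound(0,b) = 0`, `Bound(n,1) = n(n+1)/2`, and for `n > 0`, `b > 1`,
`Bound(n,b) = Σ_{i=1}^{k} i·b^{i-1} + (k+1)·(n - (b^k - 1)/(b-1))` where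
`k = ⌊log_b (n(b-1)+1)⌋`. -/
def Bound (n b : ℕ) : ℕ :=
  if n = 0 then 0
  else if b = 1 then n * (n + 1) / 2
  else
    (∑ i ∈ Finset.range (Nat.log b (n * (b - 1) + 1)), (i + 1) * b ^ i) +
      (Nat.log b (n * (b - 1) + 1) + 1) *
        (n - (b ^ Nat.log b (n * (b - 1) + 1) - 1) / (b - 1))

namespace GuessingGame

variable {α ρ : Type*} [DecidableEq α] [DecidableEq ρ] (gm : GuessingGame α ρ)

/-- Fuel-based implementation of the well-founded recursion defining `MinTotal`:
`MinTotal(∅) = 0` and for nonempty `C`,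
`MinTotal(C) = min_{g ∈ UG(C)} (|C| + Σ_{r ∈ R \ {r*}} MinTotal(C_{g,r}))`.
Fuel `|C|` suffices since for a useful guess every split is a proper subset of `C`. -/
noncomputable def MinTotalAux : ℕ → Finset α → ℕ
  | 0, _ => 0
  | n + 1, C =>
    if C = ∅ then 0
    else
      sInf (↑((gm.UG C).image fun g =>
        C.card + ∑ r ∈ gm.R.erase gm.rstar, MinTotalAux n (gm.split C g r)) : Set ℕ)

/-- `MinTotal(C)`. -/
noncomputable def MinTotal (C : Finset α) : ℕ :=
  gm.MinTotalAux C.card C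

/-- `V*(g,C) = |C| + Σ_{r ∈ R \ {r*}} MinTotal(C_{g,r})`. -/
noncomputable def Vstar (g : α) (C : Finset α) : ℕ :=
  C.card + ∑ r ∈ gm.R.erase gm.rstar, gm.MinTotal (gm.split C g r)

/-- The lower bounds `LB_i` (`i ≥ 1`; `LB 0` is junk):
`LB_1(C) = Bound(|C|, MaxSplits(S))`, `LB_2(C) = Bound(|C|, MaxSplits(C))`, and for
`i ≥ 1`, `LB_{i+2}(∅) = 0` and `LB_{i+2}(C) = min_{g ∈ UG(C)} V_i(g,C)` for nonempty `C`,
where `V_i(g,C) = |C| + Σ_{r ∈ R \ {r*}} LB_i(C_{g,r})`. -/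
noncomputable def LB : ℕ → Finset α → ℕ
  | 0, _ => 0
  | 1, C => Bound C.card (gm.MaxSplits gm.S)
  | 2, C => Bound C.card (gm.MaxSplits C)
  | n + 3, C =>
    if C = ∅ then 0
    else
      sInf (↑((gm.UG C).image fun g =>
        C.card + ∑ r ∈ gm.R.erase gm.rstar, LB (n + 1) (gm.split C g r)) : Set ℕ)

/-- `V_i(g,C) = |C| + Σ_{r ∈ R \ {r*}} LB_i(C_{g,r})`. -/
noncomputable def V (i : ℕ) (g : α) (C : Finset α) : ℕ :=
  C.card + ∑ r ∈ gm.R.erase gm.rstar, gm.LB i (gm.split C g r)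

end GuessingGame

section Statements

open GuessingGame

variable {α ρ : Type*} [DecidableEq α] [DecidableEq ρ]


namespace Statement14Aux

open Finset

/-- `T b i = 1 + b + ⋯ + b^(i-1)`: number of nodes of depth `≤ i` in a `b`-ary tree. -/
def T (b i : ℕ) : ℕ := ∑ j ∈ Finset.range i, b ^ j

/-- Alternative form of `Bound`. -/
def B' (n b : ℕ) : ℕ := ∑ i ∈ Finset.range n, (n - T b i)

lemma T_succ (b i : ℕ) : T b (i + 1) = T b i + b ^ i := by
  simp [T, Finset.sum_range_succ]

lemma T_succ' (b i : ℕ) : T b (i + 1) = b * T b i + 1 := by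
  rw [T, Finset.sum_range_succ', T, Finset.mul_sum]
  simp [pow_succ, mul_comm]

lemma le_T (b : ℕ) (hb : 1 ≤ b) (i : ℕ) : i ≤ T b i := by
  induction i with
  | zero => simp
  | succ i ih =>
    have : 1 ≤ b ^ i := Nat.one_le_pow _ _ hb
    rw [T_succ]; omega

lemma T_mono_b {b b' : ℕ} (h : b ≤ b') (i : ℕ) : T b i ≤ T b' i :=
  Finset.sum_le_sum fun j _ => Nat.pow_le_pow_left h j

lemma T_mono_i (b : ℕ) {i i' : ℕ} (h : i ≤ i') : T b i ≤ T b i' :=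
  Finset.sum_le_sum_of_subset (Finset.range_subset_range.2 h)

lemma B'_anti {b b' : ℕ} (h : b ≤ b') (n : ℕ) : B' n b' ≤ B' n b :=
  Finset.sum_le_sum fun i _ => Nat.sub_le_sub_left (T_mono_b h i) n

lemma geom (b k : ℕ) : (b - 1) * T b k = b ^ k - 1 := by
  induction k with
  | zero => simp [T]
  | succ k ih =>
    rcases Nat.eq_zero_or_pos b with rfl | hb
    · simp
    · have hx : 1 ≤ b ^ k := Nat.one_le_pow _ _ hb
      have hbb : b ^ k ≤ b * b ^ k := Nat.le_mul_of_pos_left _ hb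
      rw [T_succ, Nat.mul_add, ih, Nat.sub_mul, one_mul, pow_succ, mul_comm (b ^ k) b]
      omega

lemma kident (n b : ℕ) : ∀ k : ℕ, (∀ i, i ≤ k → T b i ≤ n) →
    ∑ i ∈ Finset.range (k + 1), (n - T b i) =
      (∑ i ∈ Finset.range k, (i + 1) * b ^ i) + (k + 1) * (n - T b k) := by
  intro k
  induction k with
  | zero => simp [T]
  | succ k ih =>
    intro h
    have h1 : T b (k + 1) ≤ n := h _ le_rfl
    have h2 : T b (k + 1) = T b k + b ^ k := T_succ b k
    rw [Finset.sum_range_succ, ih (fun i hi => h i (le_trans hi (Nat.le_succ _))),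
      Finset.sum_range_succ]
    have h3 : n - T b k = (n - T b (k + 1)) + b ^ k := by omega
    rw [h3]
    ring

lemma bound_eq {b : ℕ} (hb : 1 ≤ b) (n : ℕ) : Bound n b = B' n b := by
  rcases Nat.eq_zero_or_pos n with rfl | hn
  · simp [Bound, B']
  rcases eq_or_lt_of_le hb with rfl | hb2
  · -- b = 1
    have hT : ∀ i, T 1 i = i := by intro i; simp [T]
    have : B' n 1 = ∑ i ∈ Finset.range n, (n - i) := by
      simp only [B', hT]
    rw [Bound, if_neg (by omega), if_pos rfl, this, ← Finset.sum_range_reflect]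
    have : ∀ i ∈ Finset.range n, n - (n - 1 - i) = i + 1 := by
      intro i hi; rw [Finset.mem_range] at hi; omega
    rw [Finset.sum_congr rfl this]
    have hg := Finset.sum_range_id_mul_two n
    have : ∑ i ∈ Finset.range n, (i + 1) = (∑ i ∈ Finset.range n, i) + n := by
      rw [Finset.sum_add_distrib]; simp
    rw [this]
    rcases n with _ | m
    · simp
    · have h2 : (m + 1) * ((m + 1) - 1) = (m + 1) * m := by norm_num
      have h3 : (m + 1) * ((m + 1) + 1) = (m + 1) * m + 2 * (m + 1) := by ring
      omega
  · -- b ≥ 2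
    set k := Nat.log b (n * (b - 1) + 1) with hk
    have hargne : n * (b - 1) + 1 ≠ 0 := by omega
    have hdivT : (b ^ k - 1) / (b - 1) = T b k := by
      apply Nat.div_eq_of_eq_mul_left (by omega : 0 < b - 1)
      rw [mul_comm, geom]
    have hTk : T b k ≤ n := by
      have h1 : b ^ k ≤ n * (b - 1) + 1 := Nat.pow_log_le_self b hargne
      have h2 : (b - 1) * T b k = b ^ k - 1 := geom b k
      have : (b - 1) * T b k ≤ (b - 1) * n := by
        rw [h2, mul_comm (b - 1) n]; omega
      exact Nat.le_of_mul_le_mul_left this (by omega)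
    have hTi : ∀ i, i ≤ k → T b i ≤ n := fun i hi => le_trans (T_mono_i b hi) hTk
    have hTgt : ∀ i, k < i → n < T b i := by
      intro i hi
      have h1 : n * (b - 1) + 1 < b ^ (k + 1) := Nat.lt_pow_succ_log_self hb2 _
      have h2 : (b - 1) * T b (k + 1) = b ^ (k + 1) - 1 := geom b (k + 1)
      have h3 : (b - 1) * n < (b - 1) * T b (k + 1) := by
        rw [h2, mul_comm (b - 1) n]; omega
      have h4 : n < T b (k + 1) := lt_of_mul_lt_mul_left h3 (Nat.zero_le _)
      exact lt_of_lt_of_le h4 (T_mono_i b hi)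
    have hsum : B' n b = ∑ i ∈ Finset.range (k + 1), (n - T b i) := by
      have e1 : ∑ i ∈ Finset.range n, (n - T b i) =
          ∑ i ∈ Finset.range (max n (k + 1)), (n - T b i) := by
        apply Finset.sum_subset (Finset.range_subset_range.2 (le_max_left _ _))
        intro i hi hni
        rw [Finset.mem_range] at hi hni
        have : n ≤ i := by omega
        have := le_T b hb i
        omega
      have e2 : ∑ i ∈ Finset.range (k + 1), (n - T b i) =
          ∑ i ∈ Finset.range (max n (k + 1)), (n - T b i) := by
        apply Finset.sum_subset (Finset.range_subset_range.2 (le_max_right _ _))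
        intro i hi hni
        rw [Finset.mem_range] at hi hni
        have : k < i := by omega
        have := hTgt i this
        omega
      rw [B', e1, ← e2]
    rw [Bound, if_neg (by omega), if_neg (by omega), hsum, kident n b k hTi, ← hk, hdivT]

lemma main_ineq {ι : Type*} (I : Finset ι) (f : ι → ℕ) (n b : ℕ) (hb : 1 ≤ b)
    (hcard : (I.filter fun t => f t ≠ 0).card ≤ b)
    (hsum : n - 1 ≤ ∑ t ∈ I, f t) :
    B' n b ≤ n + ∑ t ∈ I, B' (f t) b := by
  classical
  rcases Nat.eq_zero_or_pos n with rfl | hn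
  · simp [B']
  obtain ⟨m, rfl⟩ : ∃ m, n = m + 1 := ⟨n - 1, by omega⟩
  rw [B', Finset.sum_range_succ']
  have hT0 : m + 1 - T b 0 = m + 1 := by simp [T]
  rw [hT0]
  have hstep : ∀ i, (m + 1) - T b (i + 1) = m - b * T b i := by
    intro i; rw [T_succ']; omega
  simp only [hstep]
  rw [add_comm]
  apply Nat.add_le_add_left
  calc ∑ i ∈ Finset.range m, (m - b * T b i)
      ≤ ∑ i ∈ Finset.range m, ∑ t ∈ I, (f t - T b i) := by
        apply Finset.sum_le_sum
        intro i _
        set J := I.filter fun t => f t ≠ 0 with hJ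
        have hIJ : ∑ t ∈ I, (f t - T b i) = ∑ t ∈ J, (f t - T b i) := by
          symm
          apply Finset.sum_subset (Finset.filter_subset _ _)
          intro t htI ht
          rw [Finset.mem_filter] at ht
          push_neg at ht
          simp [ht htI]
        have hfJ : ∑ t ∈ J, f t = ∑ t ∈ I, f t := Finset.sum_filter_ne_zero I
        have h1 : ∑ t ∈ J, f t ≤ ∑ t ∈ J, T b i + ∑ t ∈ J, (f t - T b i) := by
          rw [← Finset.sum_add_distrib]
          exact Finset.sum_le_sum fun t _ => by omega
        have h2 : ∑ t ∈ J, T b i = J.card * T b i := by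
          rw [Finset.sum_const, smul_eq_mul]
        have h3 : J.card * T b i ≤ b * T b i := Nat.mul_le_mul_right _ hcard
        rw [hIJ]
        omega
    _ = ∑ t ∈ I, ∑ i ∈ Finset.range m, (f t - T b i) := Finset.sum_comm
    _ ≤ ∑ t ∈ I, B' (f t) b := by
        apply Finset.sum_le_sum
        intro t _
        apply Finset.sum_le_sum_of_ne_zero
        intro i _ hne
        rw [Finset.mem_range]
        have := le_T b hb i
        omega

end Statement14Aux

namespace Statement14Aux

open GuessingGame

variable {α ρ : Type*} [DecidableEq α] [DecidableEq ρ] (gm : GuessingGame α ρ)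

lemma LB_two (C : Finset α) : gm.LB 2 C = Bound C.card (gm.MaxSplits C) := rfl

lemma LB_four (C : Finset α) (hC : C ≠ ∅) :
    gm.LB 4 C = sInf (↑((gm.UG C).image fun g =>
      C.card + ∑ r ∈ gm.R.erase gm.rstar, gm.LB 2 (gm.split C g r)) : Set ℕ) := by
  show gm.LB (1 + 3) C = _
  rw [GuessingGame.LB, if_neg hC]

lemma split_subset (C : Finset α) (g : α) (r : ρ) : gm.split C g r ⊆ C :=
  Finset.filter_subset _ _

lemma mem_rstar_split {C : Finset α} (hCS : C ⊆ gm.S) {c : α} (hc : c ∈ C) :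
    c ∈ gm.split C c gm.rstar := by
  have hG : c ∈ gm.G := gm.S_subset_G (hCS hc)
  rw [GuessingGame.split, Finset.mem_filter]
  exact ⟨hc, (gm.ans_eq_rstar_iff c hG c (hCS hc)).2 rfl⟩

lemma nSplits_pos {C : Finset α} (hCS : C ⊆ gm.S) {c : α} (hc : c ∈ C) :
    1 ≤ gm.nSplits c C := by
  rw [GuessingGame.nSplits]
  exact Finset.card_pos.2
    ⟨gm.rstar, Finset.mem_filter.2 ⟨gm.rstar_mem, c, mem_rstar_split gm hCS hc⟩⟩

lemma MaxSplits_pos {C : Finset α} (hne : C.Nonempty) (hCS : C ⊆ gm.S) :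
    1 ≤ gm.MaxSplits C := by
  obtain ⟨c, hc⟩ := hne
  exact le_trans (nSplits_pos gm hCS hc)
    (Finset.le_sup (f := fun g => gm.nSplits g C) (gm.S_subset_G (hCS hc)))

lemma nSplits_mono {C' C : Finset α} (h : C' ⊆ C) (g : α) :
    gm.nSplits g C' ≤ gm.nSplits g C := by
  apply Finset.card_le_card
  apply Finset.monotone_filter_right
  intro r _ hr
  obtain ⟨c, hc⟩ := hr
  rw [GuessingGame.split, Finset.mem_filter] at hc
  exact ⟨c, Finset.mem_filter.2 ⟨h hc.1, hc.2⟩⟩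

lemma MaxSplits_mono {C' C : Finset α} (h : C' ⊆ C) :
    gm.MaxSplits C' ≤ gm.MaxSplits C :=
  Finset.sup_mono_fun fun g _ => nSplits_mono gm h g

lemma UG_subset_G {C : Finset α} (hCS : C ⊆ gm.S) : gm.UG C ⊆ gm.G := by
  rw [GuessingGame.UG]
  split
  · exact Finset.filter_subset _ _
  · exact fun c hc => gm.S_subset_G (hCS hc)

lemma UG_nonempty {C : Finset α} (hne : C.Nonempty) (hCS : C ⊆ gm.S) :
    (gm.UG C).Nonempty := by
  rw [GuessingGame.UG]
  split
  · next hcard =>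
    obtain ⟨c, hc⟩ := hne
    obtain ⟨c', hc', hcc'⟩ : ∃ c' ∈ C, c' ≠ c := by
      obtain ⟨x, hx, y, hy, hxy⟩ := Finset.one_lt_card.1 hcard
      rcases eq_or_ne x c with rfl | h
      · exact ⟨y, hy, fun h => hxy h.symm⟩
      · exact ⟨x, hx, h⟩
    refine ⟨c, Finset.mem_filter.2 ⟨gm.S_subset_G (hCS hc), ?_⟩⟩
    have hcG : c ∈ gm.G := gm.S_subset_G (hCS hc)
    have hr' : gm.ans c c' ≠ gm.rstar := fun h =>
      hcc' ((gm.ans_eq_rstar_iff c hcG c' (hCS hc')).1 h).symm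
    have h1 : gm.rstar ∈ gm.R.filter fun r => (gm.split C c r).Nonempty :=
      Finset.mem_filter.2 ⟨gm.rstar_mem, c, mem_rstar_split gm hCS hc⟩
    have h2 : gm.ans c c' ∈ gm.R.filter fun r => (gm.split C c r).Nonempty := by
      refine Finset.mem_filter.2 ⟨gm.ans_mem c hcG c' (hCS hc'), c', ?_⟩
      exact Finset.mem_filter.2 ⟨hc', rfl⟩
    have : 1 < gm.nSplits c C :=
      Finset.one_lt_card.2 ⟨_, h1, _, h2, fun h => hr' h.symm⟩
    omega
  · exact hne

lemma sum_split_cards {C : Finset α} (hCS : C ⊆ gm.S) {g : α} (hg : g ∈ gm.G) :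
    C.card = ∑ r ∈ gm.R, (gm.split C g r).card := by
  apply Finset.card_eq_sum_card_fiberwise
  exact fun c hc => gm.ans_mem g hg c (hCS hc)

lemma rstar_split_card {C : Finset α} (hCS : C ⊆ gm.S) {g : α} (hg : g ∈ gm.G) :
    (gm.split C g gm.rstar).card ≤ 1 := by
  have : gm.split C g gm.rstar ⊆ {g} := by
    intro c hc
    rw [GuessingGame.split, Finset.mem_filter] at hc
    rw [Finset.mem_singleton]
    exact ((gm.ans_eq_rstar_iff g hg c (hCS hc.1)).1 hc.2).symm
  simpa using Finset.card_le_card this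

lemma sum_erase_split_cards {C : Finset α} (hCS : C ⊆ gm.S) {g : α} (hg : g ∈ gm.G) :
    C.card - 1 ≤ ∑ r ∈ gm.R.erase gm.rstar, (gm.split C g r).card := by
  have h1 := sum_split_cards gm hCS hg
  have h2 := rstar_split_card gm hCS hg
  rw [← Finset.add_sum_erase _ _ gm.rstar_mem] at h1
  omega

lemma filter_nonzero_card {C : Finset α} {g : α} (hg : g ∈ gm.G) :
    ((gm.R.erase gm.rstar).filter fun r => (gm.split C g r).card ≠ 0).card ≤
      gm.MaxSplits C := by
  refine le_trans (Finset.card_le_card ?_)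
    (Finset.le_sup (f := fun g' => gm.nSplits g' C) hg)
  intro r hr
  rw [Finset.mem_filter] at hr
  refine Finset.mem_filter.2 ⟨Finset.mem_of_mem_erase hr.1, ?_⟩
  rw [← Finset.card_pos]
  omega

end Statement14Aux

theorem statement_14 (gm : GuessingGame α ρ) (C : Finset α) (hCS : C ⊆ gm.S) :
    gm.LB 2 C ≤ gm.LB 4 C := by
  classical
  open Statement14Aux in
  rcases eq_or_ne C ∅ with rfl | hC
  · rw [LB_two]
    simp [Bound]
  have hne : C.Nonempty := Finset.nonempty_iff_ne_empty.2 hC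
  have hb1 : 1 ≤ gm.MaxSplits C := MaxSplits_pos gm hne hCS
  set b := gm.MaxSplits C with hbdef
  rw [LB_four gm C hC]
  set E := ((gm.UG C).image fun g =>
      C.card + ∑ r ∈ gm.R.erase gm.rstar, gm.LB 2 (gm.split C g r))
  have hEne : (↑E : Set ℕ).Nonempty := by
    obtain ⟨g0, hg0⟩ := UG_nonempty gm hne hCS
    exact ⟨_, Finset.mem_coe.2 (Finset.mem_image_of_mem _ hg0)⟩
  have hmem := Nat.sInf_mem hEne
  rw [Finset.mem_coe, Finset.mem_image] at hmem
  obtain ⟨g, hgUG, hval⟩ := hmem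
  rw [← hval]
  have hgG : g ∈ gm.G := UG_subset_G gm hCS hgUG
  -- each LB 2 of a split dominates B' of its card at branching b
  have hsplit : ∀ r ∈ gm.R.erase gm.rstar,
      B' (gm.split C g r).card b ≤ gm.LB 2 (gm.split C g r) := by
    intro r _
    rcases eq_or_ne (gm.split C g r) ∅ with he | he
    · simp [he, LB_two, Bound, B']
    · have hsne : (gm.split C g r).Nonempty := Finset.nonempty_iff_ne_empty.2 he
      have hsS : gm.split C g r ⊆ gm.S := (split_subset gm C g r).trans hCS
      have h1 : 1 ≤ gm.MaxSplits (gm.split C g r) := MaxSplits_pos gm hsne hsS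
      have h2 : gm.MaxSplits (gm.split C g r) ≤ b :=
        MaxSplits_mono gm (split_subset gm C g r)
      rw [LB_two, bound_eq h1]
      exact B'_anti h2 _
  have hkey : B' C.card b ≤ C.card +
      ∑ r ∈ gm.R.erase gm.rstar, B' (gm.split C g r).card b :=
    main_ineq (gm.R.erase gm.rstar) (fun r => (gm.split C g r).card) C.card b hb1
      (filter_nonzero_card gm hgG) (sum_erase_split_cards gm hCS hgG)
  rw [LB_two, bound_eq hb1]
  exact le_trans hkey (Nat.add_le_add_left (Finset.sum_le_sum hsplit) _)

end Statements
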